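/- Let V₁ (T₁×K), V₂ (T₂×K), S₁₁, S₁₂, S₂₁, S₂₂ (K×K), W₁ (R₁×K), W₂ (R₂×K) be real matrices and set G := fromBlocks (V₁*S₁₁*W₁ᵀ) (V₁*S₁₂*W₂ᵀ) (V₂*S₂₁*W₁ᵀ) (V₂*S₂₂*W₂ᵀ) and C := fromBlocks (V₁*S₁₁) (V₁*S₁₂) (V₂*S₂₁) (V₂*S₂₂). Then G = C * fromBlocks W₁ᵀ 0 0 W₂ᵀ, and if W₁ and W₂ are isometric (W₁ᵀW₁ = 1, W₂ᵀW₂ = 1), then for every (T₁⊕T₂)×m matrix Q: ‖G − Q * Qᵀ * G‖₂ = ‖C − Q * Qᵀ * C‖₂. -/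

import Mathlib

open Matrix
open scoped Matrix.Norms.L2Operator

lemma aux_mul_coisometry {p n l : Type*} [Fintype p] [DecidableEq p] [Fintype n]
    [DecidableEq n] [Fintype l] [DecidableEq l]
    (A : Matrix p n ℝ) (W : Matrix n l ℝ) (hW : W * Wᵀ = 1) :
    ‖A * W‖ = ‖A‖ := by
  have h1 : ‖(A * W)ᴴᴴ * (A * W)ᴴ‖ = ‖(A * W)ᴴ‖ * ‖(A * W)ᴴ‖ :=
    Matrix.l2_opNorm_conjTranspose_mul_self (A * W)ᴴ
  have h2 : ‖Aᴴᴴ * Aᴴ‖ = ‖Aᴴ‖ * ‖Aᴴ‖ := Matrix.l2_opNorm_conjTranspose_mul_self Aᴴ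
  simp only [conjTranspose_conjTranspose] at h1 h2
  have hW' : W * Wᴴ = 1 := by rw [Matrix.conjTranspose_eq_transpose_of_trivial]; exact hW
  have key : A * W * (A * W)ᴴ = A * Aᴴ := by
    rw [conjTranspose_mul, ← Matrix.mul_assoc, Matrix.mul_assoc A W, hW', Matrix.mul_one]
  rw [key, h2] at h1
  rw [Matrix.l2_opNorm_conjTranspose, Matrix.l2_opNorm_conjTranspose] at h1
  nlinarith [norm_nonneg (A * W), norm_nonneg A]

/-- Coarsening condensation for a block subdivided into four admissible sub-blocks:
the isometric block-diagonal right factor built from `W₁, W₂` can be dropped without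
changing the projection error. -/
theorem stmt_14 {T₁ T₂ R₁ R₂ K m : Type*}
    [Fintype T₁] [DecidableEq T₁] [Fintype T₂] [DecidableEq T₂]
    [Fintype R₁] [DecidableEq R₁] [Fintype R₂] [DecidableEq R₂]
    [Fintype K] [DecidableEq K] [Fintype m] [DecidableEq m]
    (V₁ : Matrix T₁ K ℝ) (V₂ : Matrix T₂ K ℝ)
    (S₁₁ S₁₂ S₂₁ S₂₂ : Matrix K K ℝ)
    (W₁ : Matrix R₁ K ℝ) (W₂ : Matrix R₂ K ℝ) :
    fromBlocks (V₁ * S₁₁ * W₁ᵀ) (V₁ * S₁₂ * W₂ᵀ) (V₂ * S₂₁ * W₁ᵀ) (V₂ * S₂₂ * W₂ᵀ) =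
        (fromBlocks (V₁ * S₁₁) (V₁ * S₁₂) (V₂ * S₂₁) (V₂ * S₂₂)) *
          fromBlocks W₁ᵀ 0 0 W₂ᵀ ∧
      (W₁ᵀ * W₁ = 1 → W₂ᵀ * W₂ = 1 →
        ∀ Q : Matrix (T₁ ⊕ T₂) m ℝ,
          ‖fromBlocks (V₁ * S₁₁ * W₁ᵀ) (V₁ * S₁₂ * W₂ᵀ)
                (V₂ * S₂₁ * W₁ᵀ) (V₂ * S₂₂ * W₂ᵀ) -
              Q * Qᵀ * fromBlocks (V₁ * S₁₁ * W₁ᵀ) (V₁ * S₁₂ * W₂ᵀ)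
                (V₂ * S₂₁ * W₁ᵀ) (V₂ * S₂₂ * W₂ᵀ)‖ =
            ‖fromBlocks (V₁ * S₁₁) (V₁ * S₁₂) (V₂ * S₂₁) (V₂ * S₂₂) -
              Q * Qᵀ * fromBlocks (V₁ * S₁₁) (V₁ * S₁₂) (V₂ * S₂₁) (V₂ * S₂₂)‖) := by
  set C := fromBlocks (V₁ * S₁₁) (V₁ * S₁₂) (V₂ * S₂₁) (V₂ * S₂₂)
  set W := fromBlocks W₁ᵀ (0 : Matrix K R₂ ℝ) (0 : Matrix K R₁ ℝ) W₂ᵀ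
  have hfact : fromBlocks (V₁ * S₁₁ * W₁ᵀ) (V₁ * S₁₂ * W₂ᵀ)
      (V₂ * S₂₁ * W₁ᵀ) (V₂ * S₂₂ * W₂ᵀ) = C * W := by
    simp [C, W, Matrix.fromBlocks_multiply, Matrix.mul_assoc]
  refine ⟨hfact, fun h1 h2 Q => ?_⟩
  have hWW : W * Wᵀ = 1 := by
    simp only [W, Matrix.fromBlocks_transpose, Matrix.transpose_zero,
      Matrix.transpose_transpose, Matrix.fromBlocks_multiply]
    rw [h1, h2]; simp [← Matrix.fromBlocks_one]
  rw [hfact]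
  have : C * W - Q * Qᵀ * (C * W) = (C - Q * Qᵀ * C) * W := by
    simp [Matrix.sub_mul, Matrix.mul_assoc]
  rw [this, aux_mul_coisometry _ _ hWW]
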